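/- Let a < 1 with a ≠ 0 and x > 0, and define S_a(n,l) by the recursion in the context. Then for every integer n ≥ 0, the series ∑_{k=0}^∞ (1/k!) · (−x/a)^k · ∏_{i=0}^{n−1} (i − a·k) converges absolutely, and e^{x/a} · ∑_{k=0}^∞ (1/k!) · (−x/a)^k · ∏_{i=0}^{n−1} (i − a·k) = ∑_{l=0}^{n} x^l · S_a(n,l). -/

import Mathlib

open Real Finset

/-- The numbers `S_a(n,l)` (generalized Stirling numbers up to the factor `a^{-l}`),
defined by `S_a(0,0) = 1`, `S_a(n,0) = 0` for `n ≥ 1`, `S_a(n,n) = 1`, and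
`S_a(n+1,l) = (n − a·l)·S_a(n,l) + S_a(n,l−1)` for `1 ≤ l ≤ n` (and `S_a(n,l) = 0`
for `l > n`). -/
noncomputable def Sgen (a : ℝ) : ℕ → ℕ → ℝ
  | 0, 0 => 1
  | 0, _ + 1 => 0
  | _ + 1, 0 => 0
  | n + 1, l + 1 => ((n : ℝ) - a * (l + 1)) * Sgen a n (l + 1) + Sgen a n l

lemma Sgen_eq_zero_of_lt (a : ℝ) : ∀ n l : ℕ, n < l → Sgen a n l = 0 := by
  intro n
  induction n with
  | zero => intro l hl; cases l with
    | zero => omega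
    | succ m => rfl
  | succ n ih =>
    intro l hl
    cases l with
    | zero => omega
    | succ m =>
      show ((n : ℝ) - a * (m + 1)) * Sgen a n (m + 1) + Sgen a n m = 0
      rw [ih (m + 1) (by omega), ih m (by omega)]
      ring

lemma fall_nonneg (k l : ℕ) : 0 ≤ ∏ j ∈ Finset.range l, ((k : ℝ) - j) := by
  rcases lt_or_ge k l with h | h
  · rw [Finset.prod_eq_zero (Finset.mem_range.2 h) (show ((k : ℝ) - (k : ℕ)) = 0 by simp)]
  · exact Finset.prod_nonneg fun j hj => sub_nonneg.2 (by
      have := Finset.mem_range.1 hj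
      exact_mod_cast le_of_lt (lt_of_lt_of_le this h))

lemma fact_mul_fall : ∀ (l j : ℕ),
    (Nat.factorial j : ℝ) * ∏ i ∈ Finset.range l, ((j : ℝ) + l - i) =
      (Nat.factorial (j + l) : ℝ) := by
  intro l
  induction l with
  | zero => intro j; simp
  | succ l ih =>
    intro j
    rw [Finset.prod_range_succ']
    have h1 : ∀ i ∈ Finset.range l, ((j : ℝ) + (l + 1 : ℕ) - ((i : ℕ) + 1 : ℕ)) =
        (j : ℝ) + l - i := by intro i _; push_cast; ring
    rw [Finset.prod_congr rfl h1]
    have h2 : ((j : ℝ) + (l + 1 : ℕ) - (0 : ℕ)) = (j : ℝ) + l + 1 := by push_cast; ring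
    rw [h2, ← mul_assoc, ih j]
    have : j + (l + 1) = (j + l) + 1 := by omega
    rw [this, Nat.factorial_succ]
    push_cast
    ring

lemma hasSum_fall (y : ℝ) (l : ℕ) :
    HasSum (fun k : ℕ => y ^ k / (Nat.factorial k : ℝ) * ∏ j ∈ Finset.range l, ((k : ℝ) - j))
      (y ^ l * Real.exp y) := by
  set f : ℕ → ℝ := fun k => y ^ k / (Nat.factorial k : ℝ) * ∏ j ∈ Finset.range l, ((k : ℝ) - j)
    with hf
  have hshift : (fun j : ℕ => f (j + l)) = fun j : ℕ => y ^ (j + l) / (Nat.factorial j : ℝ) := by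
    funext j
    have hfj : (Nat.factorial j : ℝ) ≠ 0 := Nat.cast_ne_zero.2 (Nat.factorial_ne_zero j)
    have hfjl : (Nat.factorial (j + l) : ℝ) ≠ 0 := Nat.cast_ne_zero.2 (Nat.factorial_ne_zero _)
    have hc : ∏ i ∈ Finset.range l, (((j + l : ℕ) : ℝ) - i) =
        ∏ i ∈ Finset.range l, ((j : ℝ) + l - i) := by
      apply Finset.prod_congr rfl; intro i _; push_cast; ring
    have h1 : ∏ i ∈ Finset.range l, ((j : ℝ) + l - i) =
        (Nat.factorial (j + l) : ℝ) / (Nat.factorial j : ℝ) := by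
      rw [eq_div_iff hfj, mul_comm]; exact fact_mul_fall l j
    rw [hf]
    simp only
    rw [hc, h1]
    field_simp
  have he : HasSum (fun j : ℕ => y ^ j / (Nat.factorial j : ℝ)) (Real.exp y) := by
    rw [Real.exp_eq_exp_ℝ]; exact NormedSpace.expSeries_div_hasSum_exp y
  have hg : HasSum (fun j : ℕ => y ^ (j + l) / (Nat.factorial j : ℝ)) (y ^ l * Real.exp y) := by
    have heq : (fun j : ℕ => y ^ l * (y ^ j / (Nat.factorial j : ℝ))) =
        fun j : ℕ => y ^ (j + l) / (Nat.factorial j : ℝ) := by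
      funext j; rw [pow_add]; ring
    exact heq ▸ he.mul_left (y ^ l)
  have h0 : ∑ i ∈ Finset.range l, f i = 0 := by
    apply Finset.sum_eq_zero
    intro i hi
    rw [hf]
    simp only
    rw [Finset.prod_eq_zero (Finset.mem_range.2 (Finset.mem_range.1 hi))
      (show ((i : ℝ) - (i : ℕ)) = 0 by simp), mul_zero]
  have := (hasSum_nat_add_iff (f := f) l).mp (by rw [hshift]; exact hg)
  rwa [h0, add_zero] at this

lemma prod_eq_sum_Sgen (a : ℝ) (n : ℕ) (t : ℝ) :
    ∏ i ∈ Finset.range n, ((i : ℝ) - a * t) =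
      ∑ l ∈ Finset.range (n + 1),
        Sgen a n l * (-a) ^ l * ∏ j ∈ Finset.range l, (t - j) := by
  induction n with
  | zero => simp [Sgen]
  | succ n ih =>
    rw [Finset.prod_range_succ, ih]
    set F : ℕ → ℝ :=
      fun l => ((n : ℝ) - a * l) * Sgen a n l * (-a) ^ l * ∏ j ∈ Finset.range l, (t - j)
      with hFdef
    have hu0 : F 0 = 0 := by
      cases n with
      | zero => simp [hFdef]
      | succ m =>
        have : Sgen a (m + 1) 0 = 0 := rfl
        simp [hFdef, this]
    have hutop : F (n + 1) = 0 := by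
      rw [hFdef]
      simp [Sgen_eq_zero_of_lt a n (n + 1) (by omega)]
    have step : ∀ l, Sgen a n l * (-a) ^ l * (∏ j ∈ Finset.range l, (t - j)) * ((n : ℝ) - a * t)
        = F l + Sgen a n l * (-a) ^ (l + 1) * ∏ j ∈ Finset.range (l + 1), (t - j) := by
      intro l
      rw [Finset.prod_range_succ, hFdef]
      simp only
      rw [pow_succ]
      ring
    rw [Finset.sum_mul]
    calc ∑ l ∈ Finset.range (n + 1),
          Sgen a n l * (-a) ^ l * (∏ j ∈ Finset.range l, (t - j)) * ((n : ℝ) - a * t)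
        = ∑ l ∈ Finset.range (n + 1),
            (F l + Sgen a n l * (-a) ^ (l + 1) * ∏ j ∈ Finset.range (l + 1), (t - j)) := by
          exact Finset.sum_congr rfl fun l _ => step l
      _ = (∑ l ∈ Finset.range (n + 1), F l) +
            ∑ l ∈ Finset.range (n + 1),
              Sgen a n l * (-a) ^ (l + 1) * ∏ j ∈ Finset.range (l + 1), (t - j) := by
          rw [Finset.sum_add_distrib]
      _ = (∑ l ∈ Finset.range (n + 1), F (l + 1)) +
            ∑ l ∈ Finset.range (n + 1),
              Sgen a n l * (-a) ^ (l + 1) * ∏ j ∈ Finset.range (l + 1), (t - j) := by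
          congr 1
          have h2 : ∑ l ∈ Finset.range (n + 2), F l =
              (∑ l ∈ Finset.range (n + 1), F (l + 1)) + F 0 := Finset.sum_range_succ' F (n + 1)
          have h3 : ∑ l ∈ Finset.range (n + 2), F l =
              (∑ l ∈ Finset.range (n + 1), F l) + F (n + 1) := Finset.sum_range_succ F (n + 1)
          rw [hutop, add_zero] at h3
          rw [h3, hu0, add_zero] at h2
          exact h2
      _ = ∑ l ∈ Finset.range (n + 1 + 1),
            Sgen a (n + 1) l * (-a) ^ l * ∏ j ∈ Finset.range l, (t - j) := by
          rw [Finset.sum_range_succ' (fun l => Sgen a (n + 1) l * (-a) ^ l *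
            ∏ j ∈ Finset.range l, (t - j)) (n + 1)]
          have hz : Sgen a (n + 1) 0 = 0 := rfl
          rw [← Finset.sum_add_distrib]
          simp only [hz, zero_mul, add_zero]
          apply Finset.sum_congr rfl
          intro l _
          have hrec : Sgen a (n + 1) (l + 1) =
              ((n : ℝ) - a * (l + 1)) * Sgen a n (l + 1) + Sgen a n l := rfl
          rw [hrec, hFdef]
          simp only
          push_cast
          ring

/-- **Identity after (F.4)**: for `a < 1`, `a ≠ 0`, `x > 0` and `n ≥ 0`, the series
`∑_{k≥0} (1/k!)(−x/a)^k ∏_{i=0}^{n−1}(i − ak)` converges absolutely and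
`e^{x/a} ∑_{k≥0} (1/k!)(−x/a)^k ∏_{i=0}^{n−1}(i − ak) = ∑_{l=0}^n x^l S_a(n,l)`. -/
theorem exp_series_eq_Sgen_sum (a x : ℝ) (ha : a < 1) (ha0 : a ≠ 0) (hx : 0 < x)
    (n : ℕ) :
    (Summable fun k : ℕ =>
      |(1 / (Nat.factorial k : ℝ)) * (-x / a) ^ k *
        ∏ i ∈ Finset.range n, ((i : ℝ) - a * k)|) ∧
    Real.exp (x / a) *
        ∑' k : ℕ, (1 / (Nat.factorial k : ℝ)) * (-x / a) ^ k *
          ∏ i ∈ Finset.range n, ((i : ℝ) - a * k) =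
      ∑ l ∈ Finset.range (n + 1), x ^ l * Sgen a n l := by
  set y : ℝ := -x / a with hy
  set F : ℕ → ℝ := fun k => (1 / (Nat.factorial k : ℝ)) * y ^ k *
    ∏ i ∈ Finset.range n, ((i : ℝ) - a * k) with hFdef
  have hFeq : ∀ k : ℕ, F k = ∑ l ∈ Finset.range (n + 1),
      Sgen a n l * (-a) ^ l * (y ^ k / (Nat.factorial k : ℝ) *
        ∏ j ∈ Finset.range l, ((k : ℝ) - j)) := by
    intro k
    rw [hFdef]
    simp only
    rw [prod_eq_sum_Sgen a n (k : ℝ), Finset.mul_sum]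
    apply Finset.sum_congr rfl
    intro l _
    ring
  have hsum : HasSum F (∑ l ∈ Finset.range (n + 1),
      Sgen a n l * (-a) ^ l * (y ^ l * Real.exp y)) := by
    have h := hasSum_sum (s := Finset.range (n + 1))
      (f := fun l k => Sgen a n l * (-a) ^ l * (y ^ k / (Nat.factorial k : ℝ) *
        ∏ j ∈ Finset.range l, ((k : ℝ) - j)))
      (a := fun l => Sgen a n l * (-a) ^ l * (y ^ l * Real.exp y))
      (fun l _ => (hasSum_fall y l).mul_left _)
    have heq : (fun k : ℕ => ∑ l ∈ Finset.range (n + 1),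
        Sgen a n l * (-a) ^ l * (y ^ k / (Nat.factorial k : ℝ) *
          ∏ j ∈ Finset.range l, ((k : ℝ) - j))) = F := funext fun k => (hFeq k).symm
    rwa [heq] at h
  constructor
  · -- absolute summability
    have hterm : ∀ l : ℕ, Summable (fun k : ℕ => |y| ^ k / (Nat.factorial k : ℝ) *
        ∏ j ∈ Finset.range l, ((k : ℝ) - j)) := fun l => (hasSum_fall |y| l).summable
    have hS : Summable (fun k : ℕ => ∑ l ∈ Finset.range (n + 1),
        |Sgen a n l * (-a) ^ l| * (|y| ^ k / (Nat.factorial k : ℝ) *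
          ∏ j ∈ Finset.range l, ((k : ℝ) - j))) :=
      summable_sum fun l _ => (hterm l).mul_left _
    refine hS.of_nonneg_of_le (fun k => abs_nonneg _) ?_
    intro k
    have : |F k| ≤ ∑ l ∈ Finset.range (n + 1),
        |Sgen a n l * (-a) ^ l| * (|y| ^ k / (Nat.factorial k : ℝ) *
          ∏ j ∈ Finset.range l, ((k : ℝ) - j)) := by
      rw [hFeq k]
      refine (Finset.abs_sum_le_sum_abs _ _).trans (Finset.sum_le_sum fun l _ => ?_)
      apply le_of_eq
      rw [abs_mul, abs_mul (y ^ k / (Nat.factorial k : ℝ)), abs_div, abs_pow, Nat.abs_cast,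
        abs_of_nonneg (fall_nonneg k l)]
    exact this
  · -- the identity
    rw [show (∑' k : ℕ, (1 / (Nat.factorial k : ℝ)) * y ^ k *
        ∏ i ∈ Finset.range n, ((i : ℝ) - a * k)) = ∑' k, F k from rfl]
    rw [hsum.tsum_eq, Finset.mul_sum]
    apply Finset.sum_congr rfl
    intro l _
    have hexp : Real.exp (x / a) * Real.exp y = 1 := by
      rw [← Real.exp_add, show x / a + y = 0 by rw [hy]; ring, Real.exp_zero]
    have hay : -a * y = x := by
      rw [hy]
      field_simp
    calc Real.exp (x / a) * (Sgen a n l * (-a) ^ l * (y ^ l * Real.exp y))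
        = Sgen a n l * ((-a) * y) ^ l * (Real.exp (x / a) * Real.exp y) := by
          rw [mul_pow]; ring
      _ = x ^ l * Sgen a n l := by rw [hexp, hay]; ring
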